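/- Let j be a translational covariant discrete vector field on V_N = (ZMod N)². Suppose (h₁, g₁, C₁¹, C₁²) and (h₂, g₂, C₂¹, C₂²) are two quadruples of real-valued functions of the configuration that both satisfy, for every configuration η and every x ∈ V_N, j_η(x, x+e¹) = τ_{x+e¹}h_i(η) − τ_x h_i(η) + τ_x g_i(η) − τ_{x−e²} g_i(η) + C_i¹(η) and j_η(x, x+e²) = τ_{x+e²}h_i(η) − τ_x h_i(η) + τ_{x−e¹} g_i(η) − τ_x g_i(η) + C_i²(η), where C_i¹, C_i² are translational invariant. Then C₁¹ = C₂¹, C₁² = C₂², and the differences h₁ − h₂ and g₁ − g₂ are translational invariant functions. -/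

import Mathlib

private lemma sum_shift' {N : ℕ} [NeZero N] (f : ZMod N × ZMod N → ℝ) (z : ZMod N × ZMod N) :
    ∑ x : ZMod N × ZMod N, f (x + z) = ∑ x : ZMod N × ZMod N, f x :=
  Fintype.sum_equiv (Equiv.addRight z) _ _ (fun _ => rfl)

private lemma sum_diff_zero' {N : ℕ} [NeZero N] (f : ZMod N × ZMod N → ℝ) (z : ZMod N × ZMod N) :
    ∑ x : ZMod N × ZMod N, (f (x + z) - f x) = 0 := by
  rw [Finset.sum_sub_distrib, sum_shift' f z, sub_self]

private lemma sum_decomp' {N : ℕ} [NeZero N] (F H G : ZMod N × ZMod N → ℝ) (c : ℝ)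
    (z₁ z₂ z₃ : ZMod N × ZMod N)
    (h : ∀ x, F x = H (x + z₁) - H x + (G (x + z₂) - G (x + z₃)) + c) :
    ∑ x : ZMod N × ZMod N, F x = (Fintype.card (ZMod N × ZMod N) : ℝ) * c := by
  rw [Finset.sum_congr rfl (fun x _ => h x)]
  rw [Finset.sum_add_distrib, Finset.sum_add_distrib, Finset.sum_sub_distrib,
    Finset.sum_sub_distrib, sum_shift' H z₁, sum_shift' G z₂, sum_shift' G z₃,
    sub_self, sub_self, Finset.sum_const, add_zero, zero_add, Finset.card_univ,
    nsmul_eq_mul]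

private lemma const_of_periodic' {N : ℕ} [NeZero N] (f : ZMod N × ZMod N → ℝ)
    (hp1 : ∀ x, f (x + (1,0)) = f x) (hp2 : ∀ x, f (x + (0,1)) = f x) (x : ZMod N × ZMod N) :
    f x = f 0 := by
  obtain ⟨a, ha⟩ : ∃ a : ℕ, (a : ZMod N) = x.1 := ⟨x.1.val, ZMod.natCast_rightInverse x.1⟩
  obtain ⟨b, hb⟩ : ∃ b : ℕ, (b : ZMod N) = x.2 := ⟨x.2.val, ZMod.natCast_rightInverse x.2⟩
  have key : ∀ a b : ℕ, f ((a : ZMod N), (b : ZMod N)) = f 0 := by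
    intro a
    induction a with
    | zero =>
      intro b
      induction b with
      | zero => norm_num; rfl
      | succ b ih =>
        have h := hp2 ((0:ZMod N), (b:ZMod N))
        simp only [Prod.mk_add_mk, add_zero, zero_add] at h
        push_cast at ih ⊢
        rw [h]
        exact ih
    | succ a ih =>
      intro b
      have h := hp1 (((a:ZMod N)), (b:ZMod N))
      simp only [Prod.mk_add_mk, add_zero] at h
      push_cast at ih ⊢
      rw [h]
      exact ih b
  rw [show x = ((a:ZMod N),(b:ZMod N)) from by rw [ha, hb]]
  exact key a b

private lemma periodic_of_harmonic' {N : ℕ} [NeZero N] (G : ZMod N × ZMod N → ℝ)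
    (hG : ∀ x, G (x + (1,0)) + G (x - (1,0)) + G (x + (0,1)) + G (x - (0,1)) = 4 * G x) :
    ∀ x, G (x + (1,0)) = G x ∧ G (x + (0,1)) = G x := by
  have main : ∑ x : ZMod N × ZMod N,
      (2*((G (x+(1,0)) - G x)^2 + (G (x+(0,1)) - G x)^2)) = 0 := by
    have e0 : ∀ x : ZMod N × ZMod N,
        2*((G (x+(1,0)) - G x)^2 + (G (x+(0,1)) - G x)^2) =
        ((fun y => 2*(G y)^2) (x+(1,0)) - (fun y => 2*(G y)^2) x)
        + ((fun y => 2*(G y)^2) (x+(0,1)) - (fun y => 2*(G y)^2) x)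
        - ((fun y => 2*(G y * G (y - (1,0)))) (x+(1,0)) - (fun y => 2*(G y * G (y - (1,0)))) x)
        - ((fun y => 2*(G y * G (y - (0,1)))) (x+(0,1)) - (fun y => 2*(G y * G (y - (0,1)))) x) := by
      intro x
      simp only
      rw [add_sub_cancel_right, add_sub_cancel_right]
      linear_combination (-2 * G x) * hG x
    rw [Finset.sum_congr rfl (fun x _ => e0 x), Finset.sum_sub_distrib,
      Finset.sum_sub_distrib, Finset.sum_add_distrib,
      sum_diff_zero' (fun y => 2*(G y)^2) ((1,0) : ZMod N × ZMod N),
      sum_diff_zero' (fun y => 2*(G y)^2) ((0,1) : ZMod N × ZMod N),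
      sum_diff_zero' (fun y => 2*(G y * G (y - (1,0)))) ((1,0) : ZMod N × ZMod N),
      sum_diff_zero' (fun y => 2*(G y * G (y - (0,1)))) ((0,1) : ZMod N × ZMod N)]
    norm_num
  have main2 : ∑ x : ZMod N × ZMod N,
      ((G (x+(1,0)) - G x)^2 + (G (x+(0,1)) - G x)^2) = 0 := by
    rw [← Finset.mul_sum] at main
    linarith
  have hzero := (Finset.sum_eq_zero_iff_of_nonneg (fun x _ => by positivity)).mp main2
  intro x
  have hx := hzero x (Finset.mem_univ x)
  constructor
  · nlinarith [sq_nonneg (G (x+(1,0)) - G x), sq_nonneg (G (x+(0,1)) - G x)]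
  · nlinarith [sq_nonneg (G (x+(1,0)) - G x), sq_nonneg (G (x+(0,1)) - G x)]

private lemma key_lemma' {N : ℕ} [NeZero N] (F G : ZMod N × ZMod N → ℝ)
    (eq1 : ∀ x, F (x + (1,0)) - F x + (G x - G (x - (0,1))) = 0)
    (eq2 : ∀ x, F (x + (0,1)) - F x + (G (x - (1,0)) - G x) = 0) :
    (∀ x, F (x+(1,0)) = F x) ∧ (∀ x, F (x+(0,1)) = F x) ∧
    (∀ x, G (x+(1,0)) = G x) ∧ (∀ x, G (x+(0,1)) = G x) := by
  have hG : ∀ x, G (x + (1,0)) + G (x - (1,0)) + G (x + (0,1)) + G (x - (0,1)) = 4 * G x := by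
    intro x
    have e1 := eq1 x
    have e1' := eq1 (x + (0,1))
    have e2 := eq2 x
    have e2' := eq2 (x + (1,0))
    have v1 : x + (0,1) + (1,0) = x + (1,0) + (0,1) := by ring
    have v2 : x + (0,1) - (0,1) = x := add_sub_cancel_right _ _
    have v3 : x + (1,0) - (1,0) = x := add_sub_cancel_right _ _
    rw [v1, v2] at e1'
    rw [v3] at e2'
    linarith
  have Gper := periodic_of_harmonic' G hG
  refine ⟨?_, ?_, fun x => (Gper x).1, fun x => (Gper x).2⟩
  · intro x
    have e1 := eq1 x
    have hGx : G (x - (0,1)) = G x := by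
      have h := (Gper (x - (0,1))).2
      rw [sub_add_cancel] at h
      exact h.symm
    linarith
  · intro x
    have e2 := eq2 x
    have hGx : G (x - (1,0)) = G x := by
      have h := (Gper (x - (1,0))).1
      rw [sub_add_cancel] at h
      exact h.symm
    linarith

/-- **Functional Hodge decomposition in dimension two (uniqueness part).**
Let `j` be a translational covariant discrete vector field on `V_N = (ZMod N)²`
(`j η x i` is `j_η(x, x+eⁱ⁺¹)`, covariance: `j_{τ_z η}(x+z, y+z) = j_η(x,y)` with
`(τ_z η)(w) = η (w - z)`). If `(h₁, g₁, C₁¹, C₁²)` and `(h₂, g₂, C₂¹, C₂²)` both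
satisfy the two-dimensional decomposition
`j_η(x,x+e¹) = τ_{x+e¹}h_i(η) - τ_x h_i(η) + τ_x g_i(η) - τ_{x-e²}g_i(η) + C_i¹(η)`,
`j_η(x,x+e²) = τ_{x+e²}h_i(η) - τ_x h_i(η) + τ_{x-e¹}g_i(η) - τ_x g_i(η) + C_i²(η)`
(with `τ_x f (η) = f (fun w => η (w + x))`) where the `C_i¹, C_i²` are
translational invariant, then `C₁¹ = C₂¹`, `C₁² = C₂²`, and `h₁ - h₂` and
`g₁ - g₂` are translational invariant functions. -/
theorem stmt_4 {N : ℕ} [NeZero N] (hN : 3 ≤ N) {S : Type*}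
    (j : ((ZMod N × ZMod N) → S) → (ZMod N × ZMod N) → Fin 2 → ℝ)
    (hcov : ∀ (η : (ZMod N × ZMod N) → S) (z x : ZMod N × ZMod N) (i : Fin 2),
      j (fun w => η (w - z)) (x + z) i = j η x i)
    (h₁ g₁ C₁₁ C₁₂ h₂ g₂ C₂₁ C₂₂ : ((ZMod N × ZMod N) → S) → ℝ)
    (hinv₁₁ : ∀ (η : (ZMod N × ZMod N) → S) (z : ZMod N × ZMod N),
      C₁₁ (fun w => η (w - z)) = C₁₁ η)
    (hinv₁₂ : ∀ (η : (ZMod N × ZMod N) → S) (z : ZMod N × ZMod N),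
      C₁₂ (fun w => η (w - z)) = C₁₂ η)
    (hinv₂₁ : ∀ (η : (ZMod N × ZMod N) → S) (z : ZMod N × ZMod N),
      C₂₁ (fun w => η (w - z)) = C₂₁ η)
    (hinv₂₂ : ∀ (η : (ZMod N × ZMod N) → S) (z : ZMod N × ZMod N),
      C₂₂ (fun w => η (w - z)) = C₂₂ η)
    (hdec₁e₁ : ∀ (η : (ZMod N × ZMod N) → S) (x : ZMod N × ZMod N),
      j η x 0 = h₁ (fun w => η (w + (x + (1, 0)))) - h₁ (fun w => η (w + x))
        + g₁ (fun w => η (w + x)) - g₁ (fun w => η (w + (x - (0, 1)))) + C₁₁ η)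
    (hdec₁e₂ : ∀ (η : (ZMod N × ZMod N) → S) (x : ZMod N × ZMod N),
      j η x 1 = h₁ (fun w => η (w + (x + (0, 1)))) - h₁ (fun w => η (w + x))
        + g₁ (fun w => η (w + (x - (1, 0)))) - g₁ (fun w => η (w + x)) + C₁₂ η)
    (hdec₂e₁ : ∀ (η : (ZMod N × ZMod N) → S) (x : ZMod N × ZMod N),
      j η x 0 = h₂ (fun w => η (w + (x + (1, 0)))) - h₂ (fun w => η (w + x))
        + g₂ (fun w => η (w + x)) - g₂ (fun w => η (w + (x - (0, 1)))) + C₂₁ η)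
    (hdec₂e₂ : ∀ (η : (ZMod N × ZMod N) → S) (x : ZMod N × ZMod N),
      j η x 1 = h₂ (fun w => η (w + (x + (0, 1)))) - h₂ (fun w => η (w + x))
        + g₂ (fun w => η (w + (x - (1, 0)))) - g₂ (fun w => η (w + x)) + C₂₂ η) :
    C₁₁ = C₂₁ ∧ C₁₂ = C₂₂ ∧
    (∀ (η : (ZMod N × ZMod N) → S) (z : ZMod N × ZMod N),
      (h₁ - h₂) (fun w => η (w - z)) = (h₁ - h₂) η) ∧
    (∀ (η : (ZMod N × ZMod N) → S) (z : ZMod N × ZMod N),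
      (g₁ - g₂) (fun w => η (w - z)) = (g₁ - g₂) η) := by
  have cardpos : (0:ℝ) < (Fintype.card (ZMod N × ZMod N) : ℝ) := by
    exact_mod_cast Fintype.card_pos
  have hC1 : C₁₁ = C₂₁ := by
    funext η
    have A := sum_decomp' (fun x => j η x 0)
      (fun x => h₁ (fun w => η (w + x))) (fun x => g₁ (fun w => η (w + x))) (C₁₁ η)
      (1,0) 0 (-(0,1))
      (by intro x; beta_reduce; rw [add_zero, ← sub_eq_add_neg, hdec₁e₁ η x]; ring)
    have B := sum_decomp' (fun x => j η x 0)
      (fun x => h₂ (fun w => η (w + x))) (fun x => g₂ (fun w => η (w + x))) (C₂₁ η)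
      (1,0) 0 (-(0,1))
      (by intro x; beta_reduce; rw [add_zero, ← sub_eq_add_neg, hdec₂e₁ η x]; ring)
    exact mul_left_cancel₀ (ne_of_gt cardpos) (A.symm.trans B)
  have hC2 : C₁₂ = C₂₂ := by
    funext η
    have A := sum_decomp' (fun x => j η x 1)
      (fun x => h₁ (fun w => η (w + x))) (fun x => g₁ (fun w => η (w + x))) (C₁₂ η)
      (0,1) (-(1,0)) 0
      (by intro x; beta_reduce; rw [add_zero, ← sub_eq_add_neg, hdec₁e₂ η x]; ring)
    have B := sum_decomp' (fun x => j η x 1)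
      (fun x => h₂ (fun w => η (w + x))) (fun x => g₂ (fun w => η (w + x))) (C₂₂ η)
      (0,1) (-(1,0)) 0
      (by intro x; beta_reduce; rw [add_zero, ← sub_eq_add_neg, hdec₂e₂ η x]; ring)
    exact mul_left_cancel₀ (ne_of_gt cardpos) (A.symm.trans B)
  have key : ∀ η : (ZMod N × ZMod N) → S,
      (∀ x, (fun x => h₁ (fun w => η (w + x)) - h₂ (fun w => η (w + x))) (x+(1,0))
          = (fun x => h₁ (fun w => η (w + x)) - h₂ (fun w => η (w + x))) x) ∧
      (∀ x, (fun x => h₁ (fun w => η (w + x)) - h₂ (fun w => η (w + x))) (x+(0,1))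
          = (fun x => h₁ (fun w => η (w + x)) - h₂ (fun w => η (w + x))) x) ∧
      (∀ x, (fun x => g₁ (fun w => η (w + x)) - g₂ (fun w => η (w + x))) (x+(1,0))
          = (fun x => g₁ (fun w => η (w + x)) - g₂ (fun w => η (w + x))) x) ∧
      (∀ x, (fun x => g₁ (fun w => η (w + x)) - g₂ (fun w => η (w + x))) (x+(0,1))
          = (fun x => g₁ (fun w => η (w + x)) - g₂ (fun w => η (w + x))) x) := by
    intro η
    apply key_lemma' (F := fun x => h₁ (fun w => η (w + x)) - h₂ (fun w => η (w + x)))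
      (G := fun x => g₁ (fun w => η (w + x)) - g₂ (fun w => η (w + x)))
    · intro x
      beta_reduce
      have a1 := hdec₁e₁ η x
      have a2 := hdec₂e₁ η x
      rw [hC1] at a1
      linarith
    · intro x
      beta_reduce
      have a1 := hdec₁e₂ η x
      have a2 := hdec₂e₂ η x
      rw [hC2] at a1
      linarith
  refine ⟨hC1, hC2, ?_, ?_⟩
  · intro η z
    obtain ⟨p1, p2, _, _⟩ := key η
    have h := const_of_periodic' (fun x => h₁ (fun w => η (w + x)) - h₂ (fun w => η (w + x))) p1 p2 (-z)
    beta_reduce at h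
    have efun : (fun w => η (w + (-z))) = (fun w => η (w - z)) := by
      funext w; rw [sub_eq_add_neg]
    have e0fun : (fun w => η (w + (0 : ZMod N × ZMod N))) = η := by
      funext w; rw [add_zero]
    rw [efun, e0fun] at h
    simpa [Pi.sub_apply] using h
  · intro η z
    obtain ⟨_, _, p1, p2⟩ := key η
    have h := const_of_periodic' (fun x => g₁ (fun w => η (w + x)) - g₂ (fun w => η (w + x))) p1 p2 (-z)
    beta_reduce at h
    have efun : (fun w => η (w + (-z))) = (fun w => η (w - z)) := by
      funext w; rw [sub_eq_add_neg]
    have e0fun : (fun w => η (w + (0 : ZMod N × ZMod N))) = η := by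
      funext w; rw [add_zero]
    rw [efun, e0fun] at h
    simpa [Pi.sub_apply] using h
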